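/- For each fixed nonnegative integer r, the function Ψ(μ₁, ..., μₙ) = ∏_{k=1}^n (1/r!) ∫_{μ_k}^∞ e^{-t} t^r dt is Schur-concave on (0, ∞)^n. -/

import Mathlib

open MeasureTheory

open Finset Set

/-- `x` majorizes `y`: for every `k`, the sum of the `k` largest entries of `x` is at
least the sum of any `k` entries of `y` (equivalently, of the `k` largest entries of `y`),
and the total sums are equal. -/
def Majorizes {n : ℕ} (x y : Fin n → ℝ) : Prop :=
  (∀ s : Finset (Fin n), ∃ t : Finset (Fin n),
      t.card = s.card ∧ ∑ i ∈ s, y i ≤ ∑ i ∈ t, x i) ∧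
  ∑ i, x i = ∑ i, y i

noncomputable def pf (r : ℕ) (t : ℝ) : ℝ := Real.exp (-t) * t ^ r
noncomputable def pG (r : ℕ) (a : ℝ) : ℝ := ∫ t in Set.Ioi a, pf r t

lemma pf_cont (r : ℕ) : Continuous (pf r) := by
  unfold pf; fun_prop

lemma pf_pos (r : ℕ) {t : ℝ} (ht : 0 < t) : 0 < pf r t :=
  mul_pos (Real.exp_pos _) (pow_pos ht r)

lemma pf_intOn (r : ℕ) {a : ℝ} (ha : 0 < a) : IntegrableOn (pf r) (Set.Ioi a) := by
  have h0 : IntegrableOn (fun t : ℝ => Real.exp (-t) * t ^ ((r + 1 : ℝ) - 1)) (Set.Ioi 0) :=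
    Real.GammaIntegral_convergent (by positivity)
  have h1 : IntegrableOn (pf r) (Set.Ioi 0) := by
    refine h0.congr_fun (fun t ht => ?_) measurableSet_Ioi
    simp only [pf, add_sub_cancel_right]
    rw [Real.rpow_natCast]
  exact h1.mono_set (Set.Ioi_subset_Ioi ha.le)

lemma pG_pos (r : ℕ) {a : ℝ} (ha : 0 < a) : 0 < pG r a := by
  rw [pG]
  rw [setIntegral_pos_iff_support_of_nonneg_ae]
  · have hsub : Set.Ioi a ⊆ Function.support (pf r) := fun t ht =>
      (pf_pos r (ha.trans ht)).ne'
    rw [Set.inter_eq_self_of_subset_right hsub, Real.volume_Ioi]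
    simp
  · rw [Filter.EventuallyLE, ae_restrict_iff' measurableSet_Ioi]
    exact Filter.Eventually.of_forall fun t ht => (pf_pos r (ha.trans ht)).le
  · exact pf_intOn r ha

lemma pG_split (r : ℕ) {a b : ℝ} (ha : 0 < a) (hab : a ≤ b) :
    pG r a = (∫ t in Set.Ioc a b, pf r t) + pG r b := by
  have hb : 0 < b := ha.trans_le hab
  rw [pG, pG, ← setIntegral_union (Set.Ioc_disjoint_Ioi le_rfl) measurableSet_Ioi
    ((pf_cont r).integrableOn_Ioc) (pf_intOn r hb), Set.Ioc_union_Ioi_eq_Ioi hab]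

lemma pG_hasDeriv (r : ℕ) {a : ℝ} (ha : 0 < a) : HasDerivAt (pG r) (-(pf r a)) a := by
  have key : ∀ ν ∈ Set.Ioi (0:ℝ), pG r ν = pG r 1 - ∫ t in (1:ℝ)..ν, pf r t := by
    intro ν hν
    rcases le_total ν 1 with h | h
    · rw [intervalIntegral.integral_symm, intervalIntegral.integral_of_le h,
        pG_split r hν h]
      ring
    · rw [intervalIntegral.integral_of_le h, pG_split r one_pos h]
      ring
  have hd : HasDerivAt (fun ν => pG r 1 - ∫ t in (1:ℝ)..ν, pf r t) (-(pf r a)) a := by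
    have h2 := intervalIntegral.integral_hasDerivAt_right
      ((pf_cont r).intervalIntegrable 1 a)
      ((pf_cont r).stronglyMeasurableAtFilter _ _) (pf_cont r).continuousAt
    simpa [Pi.sub_def] using (hasDerivAt_const a (pG r 1)).sub h2
  refine hd.congr_of_eventuallyEq ?_
  filter_upwards [isOpen_Ioi.mem_nhds (show a ∈ Set.Ioi (0:ℝ) from ha)] with ν hν
  exact key ν hν

lemma indicator_translate (g : ℝ → ℝ) (a c : ℝ) :
    Set.indicator (Set.Ioi (a - c)) (fun t => g (t + c)) =
      fun t => Set.indicator (Set.Ioi a) g (t + c) := by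
  funext t
  have : t ∈ Set.Ioi (a - c) ↔ t + c ∈ Set.Ioi a := by
    simp only [Set.mem_Ioi]; constructor <;> intro <;> linarith
  by_cases h : t ∈ Set.Ioi (a - c)
  · rw [Set.indicator_of_mem h, Set.indicator_of_mem (this.mp h)]
  · rw [Set.indicator_of_notMem h, Set.indicator_of_notMem (fun hc' => h (this.mpr hc'))]

lemma translate_intOn (g : ℝ → ℝ) (a c : ℝ) (hg : IntegrableOn g (Set.Ioi a)) :
    IntegrableOn (fun t => g (t + c)) (Set.Ioi (a - c)) := by
  have hg' : Integrable (Set.indicator (Set.Ioi a) g) :=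
    (integrable_indicator_iff measurableSet_Ioi).mpr hg
  have h2 : Integrable (fun t => Set.indicator (Set.Ioi a) g (t + c)) := hg'.comp_add_right c
  rw [← integrable_indicator_iff measurableSet_Ioi, indicator_translate]
  exact h2

lemma translate_integral (g : ℝ → ℝ) (a c : ℝ) :
    ∫ t in Set.Ioi (a - c), g (t + c) = ∫ t in Set.Ioi a, g t := by
  rw [← integral_indicator measurableSet_Ioi, ← integral_indicator measurableSet_Ioi,
    indicator_translate]
  exact integral_add_right_eq_self _ c

lemma hazard_mono (r : ℕ) {a b : ℝ} (ha : 0 < a) (hab : a ≤ b) :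
    pf r a / pG r a ≤ pf r b / pG r b := by
  have hb : 0 < b := ha.trans_le hab
  rw [div_le_div_iff₀ (pG_pos r ha) (pG_pos r hb)]
  have he : a - (a - b) = b := by ring
  have hGa : pG r a = ∫ t in Set.Ioi b, pf r (t + (a - b)) := by
    rw [pG, ← translate_integral (pf r) a (a - b), he]
  have hint : IntegrableOn (fun t => pf r (t + (a - b))) (Set.Ioi b) := by
    have := translate_intOn (pf r) a (a - b) (pf_intOn r ha)
    rwa [he] at this
  have h1 : pf r a * pG r b = ∫ t in Set.Ioi b, pf r a * pf r t := by
    rw [pG, integral_const_mul]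
  have h2 : pf r b * pG r a = ∫ t in Set.Ioi b, pf r b * pf r (t + (a - b)) := by
    rw [hGa, integral_const_mul]
  rw [h1, h2]
  refine setIntegral_mono_on ((pf_intOn r hb).const_mul _) (hint.const_mul _)
    measurableSet_Ioi (fun t ht => ?_)
  have htb : b < t := ht
  have key : a * t ≤ b * (t + (a - b)) := by nlinarith
  have e1 : pf r a * pf r t = Real.exp (-(a + t)) * (a * t) ^ r := by
    rw [pf, pf, mul_pow, neg_add, Real.exp_add]; ring
  have e2 : pf r b * pf r (t + (a - b)) =
      Real.exp (-(a + t)) * (b * (t + (a - b))) ^ r := by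
    rw [pf, pf, mul_pow, show -(a+t) = -b + -(t + (a-b)) by ring, Real.exp_add]; ring
  rw [e1, e2]
  exact mul_le_mul_of_nonneg_left (pow_le_pow_left₀ (mul_nonneg ha.le (hb.trans htb).le) key r) (Real.exp_pos _).le

lemma tangent (r : ℕ) {a b : ℝ} (ha : 0 < a) (hb : 0 < b) :
    Real.log (pG r b) ≤ Real.log (pG r a) + -(pf r a / pG r a) * (b - a) := by
  set F : ℝ → ℝ := fun t => Real.log (pG r t) with hF
  have hder : ∀ t : ℝ, 0 < t → HasDerivAt F (-(pf r t / pG r t)) t := by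
    intro t ht
    have := (pG_hasDeriv r ht).log (pG_pos r ht).ne'
    simpa [neg_div] using this
  rcases lt_trichotomy a b with h | h | h
  · obtain ⟨c, hc, hcd⟩ := exists_hasDerivAt_eq_slope F (fun t => -(pf r t / pG r t)) h
      (fun t ht => (hder t (lt_of_lt_of_le ha ht.1)).continuousAt.continuousWithinAt)
      (fun t ht => hder t (lt_trans ha ht.1))
    have hFb : F b - F a = -(pf r c / pG r c) * (b - a) := by
      rw [hcd, div_mul_cancel₀ _ (sub_pos.mpr h).ne']
    have hmc := hazard_mono r ha hc.1.le
    nlinarith [hc.1, hc.2]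
  · subst h; simp
  · obtain ⟨c, hc, hcd⟩ := exists_hasDerivAt_eq_slope F (fun t => -(pf r t / pG r t)) h
      (fun t ht => (hder t (lt_of_lt_of_le hb ht.1)).continuousAt.continuousWithinAt)
      (fun t ht => hder t (lt_trans hb ht.1))
    have hFb : F a - F b = -(pf r c / pG r c) * (a - b) := by
      rw [hcd, div_mul_cancel₀ _ (sub_pos.mpr h).ne']
    have hmc := hazard_mono r (hb.trans hc.1) hc.2.le
    nlinarith [hc.1, hc.2]

lemma abel_bound (w d : ℕ → ℝ) (n : ℕ)
    (hw : ∀ i, i + 1 < n → w (i + 1) ≤ w i)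
    (hD : ∀ k, k ≤ n → ∑ i ∈ range k, d i ≤ 0)
    (hDn : ∑ i ∈ range n, d i = 0) :
    ∑ i ∈ range n, w i * d i ≤ 0 := by
  have := Finset.sum_range_by_parts w d n
  simp only [smul_eq_mul] at this
  rw [this, hDn, mul_zero, zero_sub, neg_nonpos]
  apply Finset.sum_nonneg
  intro i hi
  rw [Finset.mem_range] at hi
  have h1 : w (i + 1) - w i ≤ 0 := sub_nonpos.mpr (hw i (by omega))
  have h2 : ∑ j ∈ range (i + 1), d j ≤ 0 := hD (i + 1) (by omega)
  exact mul_nonneg_of_nonpos_of_nonpos h1 h2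

lemma card_filter_ge (n k : ℕ) :
    (Finset.univ.filter (fun j : Fin n => k ≤ (j : ℕ))).card = n - k := by
  rcases lt_or_ge k n with h | h
  · have : Finset.univ.filter (fun j : Fin n => k ≤ (j : ℕ)) = Finset.Ici (⟨k, h⟩ : Fin n) := by
      ext j; simp [Fin.le_def]
    rw [this, Fin.card_Ici]
  · have : Finset.univ.filter (fun j : Fin n => k ≤ (j : ℕ)) = ∅ := by
      ext j; simp only [Finset.mem_filter, Finset.mem_univ, true_and, Finset.notMem_empty,
        iff_false]
      omega
    rw [this]; simp; omega

/-- sum over any subset is at most the sum over the top-card indices, for monotone u -/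
lemma subset_sum_le_top {n : ℕ} (u : Fin n → ℝ) (hu : Monotone u) (s : Finset (Fin n)) :
    ∑ j ∈ s, u j ≤ ∑ j ∈ Finset.univ.filter (fun j : Fin n => n - s.card ≤ (j : ℕ)), u j := by
  set m := s.card with hm
  set T := Finset.univ.filter (fun j : Fin n => n - m ≤ (j : ℕ)) with hT
  have hmn : m ≤ n := by rw [hm]; simpa using Finset.card_le_univ s
  have hcardT : T.card = m := by rw [hT, card_filter_ge]; omega
  classical
  have hsum_s : ∑ j ∈ s, u j = (∑ j ∈ s \ T, u j) + ∑ j ∈ s ∩ T, u j := by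
    rw [add_comm, Finset.sum_inter_add_sum_sdiff]
  have hsum_T : ∑ j ∈ T, u j = (∑ j ∈ T \ s, u j) + ∑ j ∈ T ∩ s, u j := by
    rw [add_comm, Finset.sum_inter_add_sum_sdiff]
  rw [hsum_s, hsum_T, Finset.inter_comm s T]
  have hkey : ∑ j ∈ s \ T, u j ≤ ∑ j ∈ T \ s, u j := by
    have hcards : (s \ T).card = (T \ s).card := by
      have h1 := Finset.card_sdiff_add_card_inter s T
      have h2 := Finset.card_sdiff_add_card_inter T s
      rw [Finset.inter_comm T s] at h2
      rw [hcardT] at h2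
      omega
    rcases Nat.eq_zero_or_pos (s \ T).card with hp | hp
    · have hp1 : s \ T = ∅ := Finset.card_eq_zero.mp hp
      have hp2 : T \ s = ∅ := Finset.card_eq_zero.mp (hcards ▸ hp)
      rw [hp1, hp2]
    · obtain ⟨a0, ha0⟩ := Finset.card_pos.mp hp
      have ha0' : (a0 : ℕ) < n - m := by
        rcases Finset.mem_sdiff.mp ha0 with ⟨_, hnot⟩
        simp only [hT, Finset.mem_filter, Finset.mem_univ, true_and, not_le] at hnot
        exact hnot
      have hnm1 : n - m - 1 < n := by omega
      set c : Fin n := ⟨n - m - 1, hnm1⟩ with hc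
      calc ∑ j ∈ s \ T, u j ≤ (s \ T).card • u c := by
            apply Finset.sum_le_card_nsmul
            intro j hj
            apply hu
            rcases Finset.mem_sdiff.mp hj with ⟨_, hnot⟩
            simp only [hT, Finset.mem_filter, Finset.mem_univ, true_and, not_le] at hnot
            rw [Fin.le_def]; simp only [hc]; omega
        _ = (T \ s).card • u c := by rw [hcards]
        _ ≤ ∑ j ∈ T \ s, u j := by
            apply Finset.card_nsmul_le_sum
            intro j hj
            apply hu
            rcases Finset.mem_sdiff.mp hj with ⟨hjT, _⟩
            simp only [hT, Finset.mem_filter, Finset.mem_univ, true_and] at hjT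
            rw [Fin.le_def]; simp only [hc]; omega
  linarith

lemma range_sum_eq_filter {n : ℕ} (g : Fin n → ℝ) :
    ∀ k : ℕ, k ≤ n → ∑ i ∈ Finset.range k, (if h : i < n then g ⟨i, h⟩ else 1) =
      ∑ j ∈ Finset.univ.filter (fun j : Fin n => (j : ℕ) < k), g j := by
  intro k
  induction k with
  | zero => intro _; simp
  | succ k ih =>
    intro hk
    have hkn : k < n := hk
    rw [Finset.sum_range_succ, ih (by omega), dif_pos hkn]
    have hins : Finset.univ.filter (fun j : Fin n => (j : ℕ) < k + 1) =
        insert (⟨k, hkn⟩ : Fin n) (Finset.univ.filter (fun j : Fin n => (j : ℕ) < k)) := by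
      ext j
      simp only [Finset.mem_filter, Finset.mem_univ, true_and, Finset.mem_insert, Fin.ext_iff]
      omega
    rw [hins, Finset.sum_insert (by simp)]
    ring

lemma filter_lt_n_eq_univ (n : ℕ) :
    Finset.univ.filter (fun j : Fin n => (j : ℕ) < n) = Finset.univ := by
  ext j; simp [j.isLt]

lemma sum_log_le {n : ℕ} (r : ℕ) (x y : Fin n → ℝ) (hx : ∀ i, 0 < x i)
    (hy : ∀ i, 0 < y i) (hmaj : Majorizes x y) :
    ∑ k, Real.log (pG r (x k)) ≤ ∑ k, Real.log (pG r (y k)) := by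
  classical
  set σ := Tuple.sort x with hσ
  set τ := Tuple.sort y with hτ
  set u : Fin n → ℝ := x ∘ σ with hu_def
  set v : Fin n → ℝ := y ∘ τ with hv_def
  have hu : Monotone u := Tuple.monotone_sort x
  have hv : Monotone v := Tuple.monotone_sort y
  have hupos : ∀ i, 0 < u i := fun i => hx (σ i)
  have hvpos : ∀ i, 0 < v i := fun i => hy (τ i)
  have hS : ∑ i, u i = ∑ i, v i := by
    rw [show ∑ i, u i = ∑ i, x i from Equiv.sum_comp σ x,
      show ∑ i, v i = ∑ i, y i from Equiv.sum_comp τ y]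
    exact hmaj.2
  -- partial sums inequality
  have hpart : ∀ k, k ≤ n →
      ∑ j ∈ Finset.univ.filter (fun j : Fin n => (j : ℕ) < k), u j ≤
      ∑ j ∈ Finset.univ.filter (fun j : Fin n => (j : ℕ) < k), v j := by
    intro k hk
    have hsplit : ∀ g : Fin n → ℝ,
        ∑ j ∈ Finset.univ.filter (fun j : Fin n => (j : ℕ) < k), g j =
        ∑ j, g j - ∑ j ∈ Finset.univ.filter (fun j : Fin n => k ≤ (j : ℕ)), g j := by
      intro g
      have h1 := Finset.sum_filter_add_sum_filter_not Finset.univ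
        (fun j : Fin n => (j : ℕ) < k) g
      have h2 : Finset.univ.filter (fun j : Fin n => ¬ (j : ℕ) < k) =
          Finset.univ.filter (fun j : Fin n => k ≤ (j : ℕ)) := by
        ext j; simp [not_lt]
      rw [h2] at h1
      linarith
    rw [hsplit u, hsplit v, hS]
    have htop : ∑ j ∈ Finset.univ.filter (fun j : Fin n => k ≤ (j : ℕ)), v j ≤
        ∑ j ∈ Finset.univ.filter (fun j : Fin n => k ≤ (j : ℕ)), u j := by
      set topk := Finset.univ.filter (fun j : Fin n => k ≤ (j : ℕ)) with htopk
      obtain ⟨t, hcard, hle⟩ := hmaj.1 (topk.map τ.toEmbedding)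
      have hy_top : ∑ i ∈ topk.map τ.toEmbedding, y i = ∑ j ∈ topk, v j := by
        rw [Finset.sum_map]; rfl
      have hx_top : ∑ i ∈ t, x i = ∑ j ∈ t.map σ.symm.toEmbedding, u j := by
        rw [Finset.sum_map]
        simp [hu_def, Equiv.toEmbedding]
      have hcard2 : (t.map σ.symm.toEmbedding).card = n - k := by
        rw [Finset.card_map, hcard, Finset.card_map, htopk, card_filter_ge]
      have hsub := subset_sum_le_top u hu (t.map σ.symm.toEmbedding)
      rw [hcard2] at hsub
      have hnnk : n - (n - k) = k := by omega
      rw [hnnk] at hsub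
      calc ∑ j ∈ topk, v j = ∑ i ∈ topk.map τ.toEmbedding, y i := hy_top.symm
        _ ≤ ∑ i ∈ t, x i := hle
        _ = ∑ j ∈ t.map σ.symm.toEmbedding, u j := hx_top
        _ ≤ ∑ j ∈ topk, u j := hsub
    linarith
  -- set up ℕ-indexed versions
  set U : ℕ → ℝ := fun i => if h : i < n then u ⟨i, h⟩ else 1 with hU
  set V : ℕ → ℝ := fun i => if h : i < n then v ⟨i, h⟩ else 1 with hV
  have hUpos : ∀ i, i < n → 0 < U i := fun i hi => by
    simp only [hU, dif_pos hi]; exact hupos _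
  have hVpos : ∀ i, i < n → 0 < V i := fun i hi => by
    simp only [hV, dif_pos hi]; exact hvpos _
  have hrangeU : ∀ k, k ≤ n → ∑ i ∈ range k, U i =
      ∑ j ∈ Finset.univ.filter (fun j : Fin n => (j : ℕ) < k), u j :=
    fun k hk => range_sum_eq_filter u k hk
  have hrangeV : ∀ k, k ≤ n → ∑ i ∈ range k, V i =
      ∑ j ∈ Finset.univ.filter (fun j : Fin n => (j : ℕ) < k), v j :=
    fun k hk => range_sum_eq_filter v k hk
  -- abel bound
  have habel : ∑ i ∈ range n, (-(pf r (V i) / pG r (V i))) * (U i - V i) ≤ 0 := by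
    apply abel_bound
    · intro i hi
      have h1 : V i ≤ V (i + 1) := by
        simp only [hV, dif_pos (by omega : i < n), dif_pos hi]
        exact hv (by simp [Fin.le_def])
      exact neg_le_neg (hazard_mono r (hVpos i (by omega)) h1)
    · intro k hk
      rw [Finset.sum_sub_distrib, hrangeU k hk, hrangeV k hk]
      linarith [hpart k hk]
    · rw [Finset.sum_sub_distrib, hrangeU n le_rfl, hrangeV n le_rfl,
        filter_lt_n_eq_univ, hS]
      ring
  -- tangent line bound
  have htang : ∑ i ∈ range n, (Real.log (pG r (U i)) - Real.log (pG r (V i))) ≤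
      ∑ i ∈ range n, (-(pf r (V i) / pG r (V i))) * (U i - V i) := by
    apply Finset.sum_le_sum
    intro i hi
    rw [Finset.mem_range] at hi
    have := tangent r (hVpos i hi) (hUpos i hi)
    linarith
  -- convert goal
  have hgoalu : ∑ k, Real.log (pG r (x k)) = ∑ i ∈ range n, Real.log (pG r (U i)) := by
    rw [show ∑ k, Real.log (pG r (x k)) = ∑ k, Real.log (pG r (u k)) from
      (Equiv.sum_comp σ (fun k => Real.log (pG r (x k)))).symm]
    have h1 : ∑ i ∈ range n, Real.log (pG r (U i)) =
        ∑ i ∈ range n, (if h : i < n then Real.log (pG r (u ⟨i, h⟩)) else 1) := by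
      refine Finset.sum_congr rfl (fun i hi => ?_)
      rw [Finset.mem_range] at hi
      simp only [hU, dif_pos hi]
    rw [h1, range_sum_eq_filter (fun j => Real.log (pG r (u j))) n le_rfl, filter_lt_n_eq_univ]
  have hgoalv : ∑ k, Real.log (pG r (y k)) = ∑ i ∈ range n, Real.log (pG r (V i)) := by
    rw [show ∑ k, Real.log (pG r (y k)) = ∑ k, Real.log (pG r (v k)) from
      (Equiv.sum_comp τ (fun k => Real.log (pG r (y k)))).symm]
    have h1 : ∑ i ∈ range n, Real.log (pG r (V i)) =
        ∑ i ∈ range n, (if h : i < n then Real.log (pG r (v ⟨i, h⟩)) else 1) := by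
      refine Finset.sum_congr rfl (fun i hi => ?_)
      rw [Finset.mem_range] at hi
      simp only [hV, dif_pos hi]
    rw [h1, range_sum_eq_filter (fun j => Real.log (pG r (v j))) n le_rfl, filter_lt_n_eq_univ]
  rw [hgoalu, hgoalv]
  have := htang.trans habel
  rw [Finset.sum_sub_distrib] at this
  linarith

theorem poisson_max_cdf_schur_concave (n r : ℕ) (x y : Fin n → ℝ)
    (hx : ∀ i, 0 < x i) (hy : ∀ i, 0 < y i) (hmaj : Majorizes x y) :
    ∏ k, ((1 / (r.factorial : ℝ)) * ∫ t in Set.Ioi (x k), Real.exp (-t) * t ^ r)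
      ≤ ∏ k, ((1 / (r.factorial : ℝ)) * ∫ t in Set.Ioi (y k), Real.exp (-t) * t ^ r) := by
  have hxg : ∀ k, (∫ t in Set.Ioi (x k), Real.exp (-t) * t ^ r) = pG r (x k) := fun k => rfl
  have hyg : ∀ k, (∫ t in Set.Ioi (y k), Real.exp (-t) * t ^ r) = pG r (y k) := fun k => rfl
  simp only [hxg, hyg]
  rw [Finset.prod_mul_distrib, Finset.prod_mul_distrib]
  have hprod : ∏ k, pG r (x k) ≤ ∏ k, pG r (y k) := by
    have hpx : 0 < ∏ k, pG r (x k) := Finset.prod_pos fun i _ => pG_pos r (hx i)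
    have hpy : 0 < ∏ k, pG r (y k) := Finset.prod_pos fun i _ => pG_pos r (hy i)
    rw [← Real.log_le_log_iff hpx hpy,
      Real.log_prod (fun i _ => (pG_pos r (hx i)).ne'),
      Real.log_prod (fun i _ => (pG_pos r (hy i)).ne')]
    exact sum_log_le r x y hx hy hmaj
  apply mul_le_mul_of_nonneg_left hprod
  apply Finset.prod_nonneg
  intro i _
  positivity
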